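/- Fix x=(x₂,x₃)∈ℝ² with x₂² ≠ x₃², and define Ψ: ℝ → ℝ² by Ψ(s) = ( cosh(s)·A'(y(s)) + sinh(s)·B'(y(s)), sinh(s)·A'(y(s)) + cosh(s)·B'(y(s)) ), where y(s) = (x₂·cosh s − x₃·sinh s, −x₂·sinh s + x₃·cosh s). Then Ψ is locally constant on the open set {s ∈ ℝ : −x₂·sinh s + x₃·cosh s ≠ 0}. (This is paper Lemma 5.9: the 1-form ψ̃'₀,₁(x,s) is locally constant on D_W outside the singularity D_{W,x}; the excluded set is where the second coordinate of m(−s)x vanishes.) -/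

import Mathlib

open MeasureTheory

/-- The `e₃`-component `B'` of the singular function `ψ̃'₀,₁`. -/
noncomputable def B' (x : ℝ × ℝ) : ℝ :=
  if x.1 ^ 2 - x.2 ^ 2 > 0 then
    (1/2) * min |x.1 - x.2| |x.1 + x.2| * Real.exp (-(Real.pi * (x.1 ^ 2 - x.2 ^ 2)))
  else 0

/-- The `e₂`-component `A'` of the singular function `ψ̃'₀,₁`. -/
noncomputable def A' (x : ℝ × ℝ) : ℝ := - Real.sign (x.1 * x.2) * B' x

/-- `y(s) = m(-s)x` for `x = (x₂,x₃)` in the Minkowski plane of signature `(1,1)`. -/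
noncomputable def yv (x₂ x₃ s : ℝ) : ℝ × ℝ :=
  (x₂ * Real.cosh s - x₃ * Real.sinh s, -x₂ * Real.sinh s + x₃ * Real.cosh s)

/-- The equivariant extension `Ψ(s) = m(s)·(A'(m(-s)x), B'(m(-s)x))`. -/
noncomputable def Psi (x₂ x₃ s : ℝ) : ℝ × ℝ :=
  (Real.cosh s * A' (yv x₂ x₃ s) + Real.sinh s * B' (yv x₂ x₃ s),
   Real.sinh s * A' (yv x₂ x₃ s) + Real.cosh s * B' (yv x₂ x₃ s))

lemma yv_q (x₂ x₃ t : ℝ) :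
    (yv x₂ x₃ t).1 ^ 2 - (yv x₂ x₃ t).2 ^ 2 = x₂ ^ 2 - x₃ ^ 2 := by
  simp only [yv]
  nlinarith [Real.cosh_sq_sub_sinh_sq t]

lemma yv_sub (x₂ x₃ t : ℝ) :
    (yv x₂ x₃ t).1 - (yv x₂ x₃ t).2 = (x₂ - x₃) * Real.exp t := by
  simp only [yv, Real.cosh_eq, Real.sinh_eq]; ring

lemma yv_add (x₂ x₃ t : ℝ) :
    (yv x₂ x₃ t).1 + (yv x₂ x₃ t).2 = (x₂ + x₃) * Real.exp (-t) := by
  simp only [yv, Real.cosh_eq, Real.sinh_eq]; ring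

lemma psi_pos (x₂ x₃ t : ℝ) (hq : x₂ ^ 2 - x₃ ^ 2 > 0)
    (hp : 0 < (yv x₂ x₃ t).1 * (yv x₂ x₃ t).2) :
    Psi x₂ x₃ t =
      (-(1/2 * |x₂ - x₃| * Real.exp (-(Real.pi * (x₂ ^ 2 - x₃ ^ 2)))),
        1/2 * |x₂ - x₃| * Real.exp (-(Real.pi * (x₂ ^ 2 - x₃ ^ 2)))) := by
  have hmin : min |(yv x₂ x₃ t).1 - (yv x₂ x₃ t).2| |(yv x₂ x₃ t).1 + (yv x₂ x₃ t).2|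
      = |x₂ - x₃| * Real.exp t := by
    rw [min_eq_left, yv_sub, abs_mul, Real.abs_exp]
    nlinarith [abs_nonneg ((yv x₂ x₃ t).1 - (yv x₂ x₃ t).2),
      abs_nonneg ((yv x₂ x₃ t).1 + (yv x₂ x₃ t).2),
      sq_abs ((yv x₂ x₃ t).1 - (yv x₂ x₃ t).2),
      sq_abs ((yv x₂ x₃ t).1 + (yv x₂ x₃ t).2), hp]
  simp only [Psi, A', B', yv_q, if_pos hq, Real.sign_of_pos hp, hmin]
  rw [Real.cosh_eq, Real.sinh_eq, Prod.mk.injEq]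
  constructor <;> · field_simp [Real.exp_neg]; have h : Real.exp t * Real.exp (-t) = 1 := (by rw [← Real.exp_add]; simp); nlinarith [h, abs_nonneg (x₂ - x₃)]

lemma psi_neg (x₂ x₃ t : ℝ) (hq : x₂ ^ 2 - x₃ ^ 2 > 0)
    (hp : (yv x₂ x₃ t).1 * (yv x₂ x₃ t).2 < 0) :
    Psi x₂ x₃ t =
      (1/2 * |x₂ + x₃| * Real.exp (-(Real.pi * (x₂ ^ 2 - x₃ ^ 2))),
        1/2 * |x₂ + x₃| * Real.exp (-(Real.pi * (x₂ ^ 2 - x₃ ^ 2)))) := by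
  have hmin : min |(yv x₂ x₃ t).1 - (yv x₂ x₃ t).2| |(yv x₂ x₃ t).1 + (yv x₂ x₃ t).2|
      = |x₂ + x₃| * Real.exp (-t) := by
    rw [min_eq_right, yv_add, abs_mul, Real.abs_exp]
    nlinarith [abs_nonneg ((yv x₂ x₃ t).1 - (yv x₂ x₃ t).2),
      abs_nonneg ((yv x₂ x₃ t).1 + (yv x₂ x₃ t).2),
      sq_abs ((yv x₂ x₃ t).1 - (yv x₂ x₃ t).2),
      sq_abs ((yv x₂ x₃ t).1 + (yv x₂ x₃ t).2), hp]
  simp only [Psi, A', B', yv_q, if_pos hq, Real.sign_of_neg hp, hmin]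
  rw [Real.cosh_eq, Real.sinh_eq, Prod.mk.injEq]
  constructor <;> · field_simp [Real.exp_neg]; have h : Real.exp t * Real.exp (-t) = 1 := (by rw [← Real.exp_add]; simp); nlinarith [h, abs_nonneg (x₂ + x₃)]

/-- Paper Lemma 5.9: for `x₂² ≠ x₃²`, the 1-form `ψ̃'₀,₁(x,s)` is locally constant on
`D_W ≅ ℝ` outside the singularity, i.e. `Ψ` is locally constant on the open set
`{s : -x₂·sinh s + x₃·cosh s ≠ 0}`. -/
theorem stmt19 (x₂ x₃ : ℝ) (hx : x₂ ^ 2 ≠ x₃ ^ 2) (s : ℝ)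
    (hs : -x₂ * Real.sinh s + x₃ * Real.cosh s ≠ 0) :
    ∀ᶠ t in nhds s, Psi x₂ x₃ t = Psi x₂ x₃ s := by
  rcases lt_or_gt_of_ne (sub_ne_zero_of_ne hx) with hq | hq
  · -- q < 0 : everything vanishes
    have hz : ∀ t : ℝ, Psi x₂ x₃ t = (0, 0) := by
      intro t
      have : ¬ ((yv x₂ x₃ t).1 ^ 2 - (yv x₂ x₃ t).2 ^ 2 > 0) := by
        rw [yv_q]; linarith
      simp [Psi, A', B', this]
    filter_upwards with t
    rw [hz t, hz s]
  · -- q > 0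
    set p : ℝ → ℝ := fun t => (yv x₂ x₃ t).1 * (yv x₂ x₃ t).2 with hpdef
    have hcont : Continuous p := by
      simp only [hpdef, yv]
      fun_prop
    have hy2 : (yv x₂ x₃ s).2 ≠ 0 := hs
    have hy1 : (yv x₂ x₃ s).1 ≠ 0 := by
      intro h
      have := yv_q x₂ x₃ s
      rw [h] at this
      nlinarith [sq_nonneg (yv x₂ x₃ s).2]
    have hps : p s ≠ 0 := mul_ne_zero hy1 hy2
    rcases hps.lt_or_gt with hneg | hpos
    · have hev : ∀ᶠ t in nhds s, p t < 0 :=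
        (hcont.continuousAt (x := s)).eventually (eventually_lt_nhds hneg)
      filter_upwards [hev] with t ht
      rw [psi_neg x₂ x₃ t hq ht, psi_neg x₂ x₃ s hq hneg]
    · have hev : ∀ᶠ t in nhds s, 0 < p t :=
        (hcont.continuousAt (x := s)).eventually (eventually_gt_nhds hpos)
      filter_upwards [hev] with t ht
      rw [psi_pos x₂ x₃ t hq ht, psi_pos x₂ x₃ s hq hpos]
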